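/- arXiv:math/0201111 — 2 statements merged into one kernel-verified Lean document; each statement's English description precedes it below -/
import Mathlib

section
/- Let $F: \mathbb{N}^s \to \mathbb{Z}[z][[q]]$ (for each length $s \geq 1$) be a family of functions satisfying $F(b_1,\dots,b_{s-1}, b_s + 1) = F(b_1,\dots,b_{s-1}, b_s) + z q^{n+1} F(b_1,\dots,b_{s-1}+1, b_s)$ where $n = b_1 + \cdots + b_s$, together with the base case $F(b_1,\dots,b_{s-1}, 0) = F(b_1,\dots,b_{s-1})$ (dropping the last entry). Then for all $b_1,\dots,b_s$ with $n = b_1+\cdots+b_s$: $F(b_1,\dots,b_s) = \sum_{j=0}^{b_s} F(b_1,\dots,b_{s-2}, b_{s-1}+j) \, z^j q^{j(n - b_s + j)} \binom{b_s}{j}_q$. -/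
/-- The Gaussian binomial coefficient as a polynomial in `q`, defined by the
standard `q`-Pascal recursion `[m+1, k+1] = q^(k+1) [m, k+1] + [m, k]`. -/
noncomputable def gaussBinom : ℕ → ℕ → Polynomial ℤ
  | _, 0 => 1
  | 0, _ + 1 => 0
  | m + 1, k + 1 => gaussBinom m (k + 1) * Polynomial.X ^ (k + 1) + gaussBinom m k
  termination_by m k => (m, k)

lemma gaussBinom_zero (m : ℕ) : gaussBinom m 0 = 1 := by rw [gaussBinom]

lemma gaussBinom_succ_succ (m k : ℕ) :
    gaussBinom (m + 1) (k + 1) = gaussBinom m (k + 1) * Polynomial.X ^ (k + 1) + gaussBinom m k := by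
  rw [gaussBinom]

lemma gaussBinom_zero_of_lt : ∀ m k : ℕ, m < k → gaussBinom m k = 0
  | 0, _ + 1, _ => by rw [gaussBinom]
  | m + 1, k + 1, h => by
    rw [gaussBinom_succ_succ, gaussBinom_zero_of_lt m (k+1) (by omega),
      gaussBinom_zero_of_lt m k (by omega)]
    ring

lemma gaussBinom_pascal2 : ∀ m j : ℕ,
    gaussBinom (m + 1) (j + 1) = gaussBinom m (j + 1) + Polynomial.X ^ (m - j) * gaussBinom m j
  | 0, 0 => by simp [gaussBinom]
  | 0, j + 1 => by
    rw [gaussBinom_succ_succ, gaussBinom_zero_of_lt 0 (j+1+1) (by omega),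
      gaussBinom_zero_of_lt 0 (j+1) (by omega)]
    ring
  | m + 1, 0 => by
    rw [gaussBinom_succ_succ (m+1) 0]
    conv_lhs => rw [gaussBinom_pascal2 m 0]
    conv_rhs => rw [gaussBinom_succ_succ m 0]
    rw [gaussBinom_zero m, gaussBinom_zero (m+1)]
    simp only [Nat.sub_zero, pow_one]
    ring
  | m + 1, j + 1 => by
    rw [gaussBinom_succ_succ (m+1) (j+1)]
    conv_lhs => rw [gaussBinom_pascal2 m (j+1), gaussBinom_pascal2 m j]
    conv_rhs => rw [gaussBinom_succ_succ m (j+1), gaussBinom_succ_succ m j]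
    rcases lt_or_ge j m with h | h
    · have h1 : m - j = (m - (j+1)) + 1 := by omega
      rw [show m + 1 - (j+1) = m - j from by omega, h1]
      ring
    · rw [gaussBinom_zero_of_lt m (j+1) (by omega)]
      rw [show m + 1 - (j + 1) = m - j from by omega]
      ring

theorem stmt_7 (F : List ℕ → PowerSeries (Polynomial ℤ))
    (z : PowerSeries (Polynomial ℤ)) (hz : z = PowerSeries.C (R := Polynomial ℤ) Polynomial.X)
    (q : PowerSeries (Polynomial ℤ)) (hq : q = PowerSeries.X)
    (hrec : ∀ (l : List ℕ) (c b : ℕ),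
      F (l ++ [c, b + 1]) = F (l ++ [c, b]) + z * q ^ (l.sum + c + b + 1) * F (l ++ [c + 1, b]))
    (hbase : ∀ l : List ℕ, F (l ++ [0]) = F l) :
    ∀ (l : List ℕ) (c b : ℕ),
      F (l ++ [c, b]) = ∑ j ∈ Finset.range (b + 1),
        F (l ++ [c + j]) * z ^ j * q ^ (j * (l.sum + c + j)) *
          Polynomial.eval₂ (Int.castRingHom (PowerSeries (Polynomial ℤ))) q (gaussBinom b j) := by
  intro l c b
  induction b generalizing c with
  | zero =>
    have h0 : l ++ [c, 0] = (l ++ [c]) ++ [0] := by simp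
    rw [h0, hbase]
    simp [gaussBinom]
  | succ b ih =>
    set Ev : Polynomial ℤ → PowerSeries (Polynomial ℤ) :=
      Polynomial.eval₂ (Int.castRingHom (PowerSeries (Polynomial ℤ))) q with hEv
    rw [hrec l c b, ih c, ih (c+1)]
    rw [Finset.sum_range_succ' (fun j => F (l ++ [c + j]) * z ^ j * q ^ (j * (l.sum + c + j)) * Ev (gaussBinom (b+1) j)) (b+1)]
    rw [Finset.sum_range_succ' (fun j => F (l ++ [c + j]) * z ^ j * q ^ (j * (l.sum + c + j)) * Ev (gaussBinom b j)) b]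
    have hext : ∑ j ∈ Finset.range b,
        F (l ++ [c + (j+1)]) * z ^ (j+1) * q ^ ((j+1) * (l.sum + c + (j+1))) * Ev (gaussBinom b (j+1))
        = ∑ j ∈ Finset.range (b+1),
        F (l ++ [c + (j+1)]) * z ^ (j+1) * q ^ ((j+1) * (l.sum + c + (j+1))) * Ev (gaussBinom b (j+1)) := by
      rw [Finset.sum_range_succ, gaussBinom_zero_of_lt b (b+1) (by omega)]
      simp [hEv]
    rw [hext, Finset.mul_sum, add_right_comm, ← Finset.sum_add_distrib]
    have hsum : ∑ j ∈ Finset.range (b+1),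
        (F (l ++ [c + (j+1)]) * z ^ (j+1) * q ^ ((j+1) * (l.sum + c + (j+1))) * Ev (gaussBinom b (j+1))
          + z * q ^ (l.sum + c + b + 1) *
            (F (l ++ [c + 1 + j]) * z ^ j * q ^ (j * (l.sum + (c+1) + j)) * Ev (gaussBinom b j)))
        = ∑ j ∈ Finset.range (b+1),
          F (l ++ [c + (j+1)]) * z ^ (j+1) * q ^ ((j+1) * (l.sum + c + (j+1))) * Ev (gaussBinom (b+1) (j+1)) := by
      apply Finset.sum_congr rfl
      intro j hj
      have hj' : j ≤ b := by simpa [Nat.lt_succ_iff] using hj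
      obtain ⟨d, rfl⟩ := Nat.le.dest hj'
      have hgb : Ev (gaussBinom (j + d + 1) (j + 1))
          = Ev (gaussBinom (j + d) (j + 1)) + q ^ d * Ev (gaussBinom (j + d) j) := by
        rw [gaussBinom_pascal2, hEv, Polynomial.eval₂_add, Polynomial.eval₂_mul,
          Polynomial.eval₂_X_pow]
        simp
      rw [hgb]
      have hl : l ++ [c + 1 + j] = l ++ [c + (j + 1)] := by
        congr 2
        omega
      rw [hl]
      have hexp : l.sum + c + (j + d) + 1 + j * (l.sum + (c + 1) + j)
          = (j + 1) * (l.sum + c + (j + 1)) + d := by ring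
      have hq2 : q ^ (l.sum + c + (j + d) + 1) * q ^ (j * (l.sum + (c + 1) + j))
          = q ^ ((j + 1) * (l.sum + c + (j + 1))) * q ^ d := by
        rw [← pow_add, ← pow_add, hexp]
      calc F (l ++ [c + (j + 1)]) * z ^ (j + 1) * q ^ ((j + 1) * (l.sum + c + (j + 1))) * Ev (gaussBinom (j+d) (j + 1))
            + z * q ^ (l.sum + c + (j+d) + 1) * (F (l ++ [c + (j + 1)]) * z ^ j * q ^ (j * (l.sum + (c + 1) + j)) * Ev (gaussBinom (j+d) j))
          = F (l ++ [c + (j + 1)]) * z ^ (j + 1) * q ^ ((j + 1) * (l.sum + c + (j + 1))) * Ev (gaussBinom (j+d) (j + 1))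
            + F (l ++ [c + (j + 1)]) * z ^ (j+1) * (q ^ (l.sum + c + (j+d) + 1) * q ^ (j * (l.sum + (c + 1) + j))) * Ev (gaussBinom (j+d) j) := by ring
        _ = _ := by rw [hq2]; ring
    rw [hsum]
    rw [gaussBinom_zero, gaussBinom_zero]
end

section
/- Let $V(0) \subseteq V(1) \subseteq \cdots \subseteq V(r) = W$ be a filtration of a finite-dimensional complex vector space $W$, let $G = \mathbb{C}[z_1,\dots,z_n] \otimes W$ be the space of $W$-valued polynomials, and with $s = z_1 - z_2$, $t = z_1 + z_2$, write each $g \in G$ as $g = \sum_i s^i g_i(t, z_3, \dots, z_n)$. Let $G^c = \{ g \in G : g_i \text{ takes values in } V(i) \text{ for all } i \le r \}$. Then $G^c$ is a free $\mathbb{C}[z_1,\dots,z_n]$-module of rank $\dim W$; explicitly, if $w_1,\dots,w_l$ is a basis of $W$ adapted to the filtration (i.e., $w_1,\dots,w_{k(i)}$ is a basis of $V(i)$), then the elements $s^{d(j)} w_j$ (where $d(j)$ is the filtration level of $w_j$) form a basis of $G^c$ over $\mathbb{C}[z_1,\dots,z_n]$. -/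
open TensorProduct

/-- Extraction of the coefficient of `s^i`, where `s` is the variable `X 0` of
`ℂ[s, t, z_3, …, z_n]` (with `n = m + 2` variables), as a `ℂ`-linear map to the
polynomial ring in the remaining variables. -/
noncomputable def coeffS (m i : ℕ) :
    MvPolynomial (Fin (m + 2)) ℂ →ₗ[ℂ] MvPolynomial (Fin (m + 1)) ℂ :=
  (LinearMap.restrictScalars ℂ (Polynomial.lcoeff (MvPolynomial (Fin (m + 1)) ℂ) i)).comp
    (MvPolynomial.finSuccEquiv ℂ (m + 1)).toLinearMap

/-- The condition cutting out `G^c`: each coefficient `g_i` of `s^i` takes values in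
`V i`, i.e. lies in the image of `B ⊗ V i → B ⊗ W`. -/
def memGc (m r : ℕ) (W : Type) [AddCommGroup W] [Module ℂ W] (V : ℕ → Submodule ℂ W)
    (g : MvPolynomial (Fin (m + 2)) ℂ ⊗[ℂ] W) : Prop :=
  ∀ i ≤ r, LinearMap.rTensor W (coeffS m i) g ∈
    LinearMap.range (LinearMap.lTensor (MvPolynomial (Fin (m + 1)) ℂ) (V i).subtype)

/-- The proposed basis element `s^{d(j)} ⊗ w_j`. -/
noncomputable def basVec (m lW : ℕ) (W : Type) [AddCommGroup W] [Module ℂ W]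
    (w : Fin lW → W) (d : Fin lW → ℕ) (j : Fin lW) :
    MvPolynomial (Fin (m + 2)) ℂ ⊗[ℂ] W :=
  ((MvPolynomial.X 0 : MvPolynomial (Fin (m + 2)) ℂ) ^ d j) ⊗ₜ[ℂ] w j

set_option maxHeartbeats 1000000 in
theorem stmt_14 (m r lW : ℕ) (W : Type) [AddCommGroup W] [Module ℂ W]
    [FiniteDimensional ℂ W]
    (V : ℕ → Submodule ℂ W) (hmono : Monotone V) (htop : V r = ⊤)
    (w : Fin lW → W) (hind : LinearIndependent ℂ w)
    (kf : ℕ → ℕ) (hkf : ∀ i ≤ r, V i = Submodule.span ℂ (w '' {j | (j : ℕ) < kf i}))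
    (hkr : kf r = lW)
    (d : Fin lW → ℕ) (hd : ∀ j : Fin lW, ((j : ℕ) < kf (d j)) ∧ ∀ i < d j, kf i ≤ (j : ℕ)) :
    (∀ j : Fin lW, memGc m r W V (basVec m lW W w d j)) ∧
    ∀ g : MvPolynomial (Fin (m + 2)) ℂ ⊗[ℂ] W, memGc m r W V g →
      ∃! c : Fin lW → MvPolynomial (Fin (m + 2)) ℂ,
        g = ∑ j : Fin lW, c j • basVec m lW W w d j := by
  classical
  -- `w` is a basis of `W`
  have hset : (w '' {j : Fin lW | (j : ℕ) < kf r}) = Set.range w := by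
    rw [hkr]; ext x; simp [Fin.is_lt]
  have hspan : ⊤ ≤ Submodule.span ℂ (Set.range w) := by
    rw [← hset, ← hkf r le_rfl, htop]
  let b : Module.Basis (Fin lW) ℂ W := Module.Basis.mk hind hspan
  have hbcoe : ⇑b = w := Module.Basis.coe_mk hind hspan
  have hdjr : ∀ j : Fin lW, d j ≤ r := by
    intro j
    by_contra h
    push_neg at h
    have := (hd j).2 r h
    rw [hkr] at this
    exact absurd j.is_lt (not_lt.2 this)
  set bA := b.baseChange (MvPolynomial (Fin (m + 2)) ℂ) with hbA
  set bB := b.baseChange (MvPolynomial (Fin (m + 1)) ℂ) with hbB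
  -- coordinates commute with `rTensor f` for ℂ-linear `f`
  have key : ∀ (f : MvPolynomial (Fin (m + 2)) ℂ →ₗ[ℂ] MvPolynomial (Fin (m + 1)) ℂ)
      (y : MvPolynomial (Fin (m + 2)) ℂ ⊗[ℂ] W) (j : Fin lW),
      bB.repr (LinearMap.rTensor W f y) j = f (bA.repr y j) := by
    intro f y j
    induction y using TensorProduct.induction_on with
    | zero => simp
    | tmul x v =>
        rw [LinearMap.rTensor_tmul, hbA, hbB, Module.Basis.baseChange_repr_tmul,
          Module.Basis.baseChange_repr_tmul, map_smul]
    | add y1 y2 h1 h2 => simp [map_add, h1, h2]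
  -- elements of the range of `lTensor` have vanishing high coordinates
  have memRange : ∀ i ≤ r, ∀ y ∈ LinearMap.range
        (LinearMap.lTensor (MvPolynomial (Fin (m + 1)) ℂ) (V i).subtype),
      ∀ j : Fin lW, kf i ≤ (j : ℕ) → bB.repr y j = 0 := by
    rintro i hi y ⟨x, rfl⟩ j hj
    induction x using TensorProduct.induction_on with
    | zero => simp
    | tmul p v =>
        rw [LinearMap.lTensor_tmul, hbB, Module.Basis.baseChange_repr_tmul]
        have hv : b.repr ((V i).subtype v) j = 0 := by
          have hvmem : ((V i).subtype v : W) ∈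
              Submodule.span ℂ (b '' {j' : Fin lW | (j' : ℕ) < kf i}) := by
            rw [hbcoe, ← hkf i hi]; exact v.2
          have hsup := b.repr_support_subset_of_mem_span _ hvmem
          by_contra h
          have : j ∈ ({j' : Fin lW | (j' : ℕ) < kf i} : Set (Fin lW)) :=
            hsup (Finsupp.mem_support_iff.2 h)
          exact absurd this (by simp [not_lt.2 hj])
        rw [hv, zero_smul]
    | add y1 y2 h1 h2 => simp [map_add, h1, h2]
  constructor
  · -- the proposed basis vectors belong to `G^c`
    intro j i hi
    rcases eq_or_ne i (d j) with heq | hne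
    · subst heq
      have hwj : w j ∈ V (d j) := by
        rw [hkf (d j) hi]
        exact Submodule.subset_span ⟨j, (hd j).1, rfl⟩
      refine ⟨(1 : MvPolynomial (Fin (m + 1)) ℂ) ⊗ₜ (⟨w j, hwj⟩ : V (d j)), ?_⟩
      rw [LinearMap.lTensor_tmul]
      show _ = LinearMap.rTensor W (coeffS m (d j))
        (((MvPolynomial.X 0 : MvPolynomial (Fin (m + 2)) ℂ) ^ d j) ⊗ₜ[ℂ] w j)
      rw [LinearMap.rTensor_tmul]
      congr 1
      simp [coeffS, map_pow, MvPolynomial.finSuccEquiv_X_zero, Polynomial.coeff_X_pow]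
    · have hz : LinearMap.rTensor W (coeffS m i) (basVec m lW W w d j) = 0 := by
        show LinearMap.rTensor W (coeffS m i)
          (((MvPolynomial.X 0 : MvPolynomial (Fin (m + 2)) ℂ) ^ d j) ⊗ₜ[ℂ] w j) = 0
        rw [LinearMap.rTensor_tmul]
        have h0 : coeffS m i ((MvPolynomial.X 0 : MvPolynomial (Fin (m + 2)) ℂ) ^ d j) = 0 := by
          simp [coeffS, map_pow, MvPolynomial.finSuccEquiv_X_zero, Polynomial.coeff_X_pow, hne]
        rw [h0, TensorProduct.zero_tmul]
      rw [hz]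
      exact Submodule.zero_mem _
  · -- existence and uniqueness of the coordinates
    intro g hg
    have hdvd : ∀ j : Fin lW, ∃ c : MvPolynomial (Fin (m + 2)) ℂ,
        bA.repr g j = (MvPolynomial.X 0 : MvPolynomial (Fin (m + 2)) ℂ) ^ d j * c := by
      intro j
      have hcoeffs : ∀ i < d j,
          (MvPolynomial.finSuccEquiv ℂ (m + 1) (bA.repr g j)).coeff i = 0 := by
        intro i hij
        have hir : i ≤ r := le_trans (le_of_lt hij) (hdjr j)
        have h1 := key (coeffS m i) g j
        have h2 := memRange i hir _ (hg i hir) j ((hd j).2 i hij)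
        have h3 : coeffS m i (bA.repr g j) = 0 := by rw [← h1, h2]
        simpa [coeffS] using h3
      obtain ⟨q, hq⟩ := Polynomial.X_pow_dvd_iff.2 hcoeffs
      refine ⟨(MvPolynomial.finSuccEquiv ℂ (m + 1)).symm q, ?_⟩
      apply (MvPolynomial.finSuccEquiv ℂ (m + 1)).injective
      rw [hq, map_mul, map_pow, MvPolynomial.finSuccEquiv_X_zero, AlgEquiv.apply_symm_apply]
    choose c hc using hdvd
    have hsmul : ∀ (a : MvPolynomial (Fin (m + 2)) ℂ) (j : Fin lW),
        a • basVec m lW W w d j =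
          (a * (MvPolynomial.X 0 : MvPolynomial (Fin (m + 2)) ℂ) ^ d j) • bA j := by
      intro a j
      rw [hbA, Module.Basis.baseChange_apply, hbcoe]
      show a • (((MvPolynomial.X 0 : MvPolynomial (Fin (m + 2)) ℂ) ^ d j) ⊗ₜ[ℂ] w j) =
        (a * (MvPolynomial.X 0 : MvPolynomial (Fin (m + 2)) ℂ) ^ d j) •
          ((1 : MvPolynomial (Fin (m + 2)) ℂ) ⊗ₜ[ℂ] w j)
      rw [TensorProduct.smul_tmul', TensorProduct.smul_tmul', smul_eq_mul, smul_eq_mul, mul_one]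
    refine ⟨c, ?_, ?_⟩
    · calc g = ∑ j : Fin lW, bA.repr g j • bA j := (bA.sum_repr g).symm
        _ = ∑ j : Fin lW, c j • basVec m lW W w d j := by
            refine Finset.sum_congr rfl fun j _ => ?_
            rw [hsmul, hc j, mul_comm]
    · intro c' hc'
      funext j
      have h1 : g = ∑ j : Fin lW, (c' j *
          (MvPolynomial.X 0 : MvPolynomial (Fin (m + 2)) ℂ) ^ d j) • bA j := by
        rw [hc']
        exact Finset.sum_congr rfl fun j _ => hsmul _ _
      have h2 : bA.repr g j = c' j *
          (MvPolynomial.X 0 : MvPolynomial (Fin (m + 2)) ℂ) ^ d j := by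
        rw [h1]
        exact congrFun (bA.repr_sum_self _) j
      have h3 : (MvPolynomial.X 0 : MvPolynomial (Fin (m + 2)) ℂ) ^ d j * c' j =
          (MvPolynomial.X 0 : MvPolynomial (Fin (m + 2)) ℂ) ^ d j * c j := by
        rw [mul_comm, ← h2, hc j]
      exact mul_left_cancel₀ (pow_ne_zero _ (MvPolynomial.X_ne_zero 0)) h3
end
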